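/- Let s, q ∈ ℍ with s ∉ [q]. Then the left F-kernel satisfies the equation F_L(s,q) s − q F_L(s,q) = −4 Q_{c,s}(q)^{-1}. -/

import Mathlib

noncomputable section

open scoped Quaternion
open Finset

/-- The imaginary units `e₁, e₂, e₃` of the quaternions `ℍ = ℍ[ℝ]`. -/
def e1 : ℍ[ℝ] := ⟨0, 1, 0, 0⟩
def e2 : ℍ[ℝ] := ⟨0, 0, 1, 0⟩
def e3 : ℍ[ℝ] := ⟨0, 0, 0, 1⟩

/-- The (left) Fueter operator `Df = ∂_{q₀}f + e₁∂_{q₁}f + e₂∂_{q₂}f + e₃∂_{q₃}f`,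
where the partial derivatives are the directional derivatives along `1, e₁, e₂, e₃`. -/
def Dop (f : ℍ[ℝ] → ℍ[ℝ]) (q : ℍ[ℝ]) : ℍ[ℝ] :=
  fderiv ℝ f q 1 + e1 * fderiv ℝ f q e1 + e2 * fderiv ℝ f q e2 + e3 * fderiv ℝ f q e3

/-- The (left) conjugate Fueter operator
`D̄f = ∂_{q₀}f − e₁∂_{q₁}f − e₂∂_{q₂}f − e₃∂_{q₃}f`. -/
def Dbar (f : ℍ[ℝ] → ℍ[ℝ]) (q : ℍ[ℝ]) : ℍ[ℝ] :=
  fderiv ℝ f q 1 - e1 * fderiv ℝ f q e1 - e2 * fderiv ℝ f q e2 - e3 * fderiv ℝ f q e3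

/-- The right Fueter operator `fD = ∂_{q₀}f + (∂_{q₁}f)e₁ + (∂_{q₂}f)e₂ + (∂_{q₃}f)e₃`. -/
def DopR (f : ℍ[ℝ] → ℍ[ℝ]) (q : ℍ[ℝ]) : ℍ[ℝ] :=
  fderiv ℝ f q 1 + fderiv ℝ f q e1 * e1 + fderiv ℝ f q e2 * e2 + fderiv ℝ f q e3 * e3

/-- The right conjugate Fueter operator
`fD̄ = ∂_{q₀}f − (∂_{q₁}f)e₁ − (∂_{q₂}f)e₂ − (∂_{q₃}f)e₃`. -/
def DbarR (f : ℍ[ℝ] → ℍ[ℝ]) (q : ℍ[ℝ]) : ℍ[ℝ] :=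
  fderiv ℝ f q 1 - fderiv ℝ f q e1 * e1 - fderiv ℝ f q e2 * e2 - fderiv ℝ f q e3 * e3

/-- The Laplacian in the four real variables `q₀, q₁, q₂, q₃`. -/
def Lap (f : ℍ[ℝ] → ℍ[ℝ]) (q : ℍ[ℝ]) : ℍ[ℝ] :=
  fderiv ℝ (fun p => fderiv ℝ f p 1) q 1 + fderiv ℝ (fun p => fderiv ℝ f p e1) q e1 +
    fderiv ℝ (fun p => fderiv ℝ f p e2) q e2 + fderiv ℝ (fun p => fderiv ℝ f p e3) q e3

/-- `s ∈ [q]`: membership in the 2-sphere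
`[q] = {p : Re(p) = Re(q), |Im(p)| = |Im(q)|}` of `q`. -/
def inSphereOf (s q : ℍ[ℝ]) : Prop := s.re = q.re ∧ ‖s.im‖ = ‖q.im‖

/-- `Q_{c,s}(q) = s² − 2 Re(q) s + |q|²`. -/
def Qc (s q : ℍ[ℝ]) : ℍ[ℝ] := s ^ 2 - 2 * (q.re : ℍ[ℝ]) * s + ((‖q‖ ^ 2 : ℝ) : ℍ[ℝ])

/-- The left slice hyperholomorphic Cauchy kernel `S_L^{-1}(s,q) = (s − q̄) Q_{c,s}(q)⁻¹`. -/
def SL (s q : ℍ[ℝ]) : ℍ[ℝ] := (s - star q) * (Qc s q)⁻¹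

/-- The right slice hyperholomorphic Cauchy kernel `S_R^{-1}(s,q) = Q_{c,s}(q)⁻¹ (s − q̄)`. -/
def SR (s q : ℍ[ℝ]) : ℍ[ℝ] := (Qc s q)⁻¹ * (s - star q)

/-- The left `F`-kernel `F_L(s,q) = −4 (s − q̄) Q_{c,s}(q)^{-2}`. -/
def FL (s q : ℍ[ℝ]) : ℍ[ℝ] := -4 * (s - star q) * ((Qc s q)⁻¹) ^ 2

/-- The right `F`-kernel `F_R(s,q) = −4 Q_{c,s}(q)^{-2} (s − q̄)`. -/
def FR (s q : ℍ[ℝ]) : ℍ[ℝ] := -4 * ((Qc s q)⁻¹) ^ 2 * (s - star q)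

/-- The Clifford–Appell polynomials
`Q_ℓ(q,q̄) = (2/((ℓ+1)(ℓ+2))) Σ_{j=0}^{ℓ} (ℓ−j+1) q^{ℓ−j} q̄^j`. -/
def QA (ℓ : ℕ) (q : ℍ[ℝ]) : ℍ[ℝ] :=
  ((2 : ℝ) / ((ℓ + 1) * (ℓ + 2))) •
    ∑ j ∈ Finset.range (ℓ + 1), ((ℓ - j + 1 : ℕ) : ℍ[ℝ]) * q ^ (ℓ - j) * (star q) ^ j


lemma coe_two' : ((2:ℝ) : ℍ[ℝ]) = 2 := by
  rw [show (2:ℝ) = (1:ℝ)+(1:ℝ) by norm_num, Quaternion.coe_add, Quaternion.coe_one,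
    one_add_one_eq_two]

lemma aux_norm_sq (q : ℍ[ℝ]) : ‖q‖ * ‖q‖ = q.re^2 + q.imI^2 + q.imJ^2 + q.imK^2 := by
  rw [← Quaternion.normSq_eq_norm_mul_self, Quaternion.normSq_def']

lemma aux_norm_im_sq (q : ℍ[ℝ]) : ‖q.im‖^2 = q.imI^2 + q.imJ^2 + q.imK^2 := by
  rw [sq, ← Quaternion.normSq_eq_norm_mul_self, Quaternion.normSq_def']; simp

lemma Qc_ne_zero (s q : ℍ[ℝ]) (h : ¬ inSphereOf s q) : Qc s q ≠ 0 := by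
  intro h0
  apply h
  have hq2 : (2 : ℍ[ℝ]) * (q.re : ℍ[ℝ]) * s = ((2*q.re : ℝ) : ℍ[ℝ]) * s := by
    rw [Quaternion.coe_mul, coe_two']
  rw [Qc, hq2] at h0
  have hre := congrArg QuaternionAlgebra.re h0
  have hI := congrArg QuaternionAlgebra.imI h0
  have hJ := congrArg QuaternionAlgebra.imJ h0
  have hK := congrArg QuaternionAlgebra.imK h0
  simp [Quaternion.ext_iff, pow_two, Quaternion.re_mul, Quaternion.imI_mul,
    Quaternion.imJ_mul, Quaternion.imK_mul] at hre hI hJ hK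
  have hnq := aux_norm_sq q
  have hx : s.imI * (s.re - q.re) = 0 := by linear_combination hI / 2
  have hy : s.imJ * (s.re - q.re) = 0 := by linear_combination hJ / 2
  have hz : s.imK * (s.re - q.re) = 0 := by linear_combination hK / 2
  have hrel : s.imI^2 + s.imJ^2 + s.imK^2
      = (s.re - q.re)^2 + (q.imI^2 + q.imJ^2 + q.imK^2) := by
    linear_combination (-1) * hre + hnq
  have hsum : ((s.re - q.re)^2 + (q.imI^2 + q.imJ^2 + q.imK^2)) * (s.re - q.re) = 0 := by
    linear_combination s.imI * hx + s.imJ * hy + s.imK * hz - (s.re - q.re) * hrel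
  have hsq : s.re = q.re := by
    rcases mul_eq_zero.mp hsum with h' | h'
    · have h2 : (s.re - q.re)^2 = 0 := by
        nlinarith [sq_nonneg (s.re - q.re), sq_nonneg q.imI, sq_nonneg q.imJ, sq_nonneg q.imK]
      have := sq_eq_zero_iff.mp h2; linarith
    · linarith
  refine ⟨hsq, ?_⟩
  have h1 : ‖s.im‖^2 = ‖q.im‖^2 := by
    rw [aux_norm_im_sq, aux_norm_im_sq]; nlinarith [hrel, hsq]
  have := congrArg Real.sqrt h1
  simpa [Real.sqrt_sq, norm_nonneg] using this

lemma Qc_commute (s q : ℍ[ℝ]) : Commute s (Qc s q) := by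
  have c1 : Commute s (s^2) := (Commute.refl s).pow_right 2
  have c2 : Commute s (2 * (q.re : ℍ[ℝ]) * s) := by
    have : Commute s ((q.re : ℍ[ℝ])) := (Quaternion.coe_commute q.re s).symm
    exact ((Commute.ofNat_right s 2).mul_right this).mul_right (Commute.refl s)
  have c3 : Commute s (((‖q‖ ^ 2 : ℝ) : ℍ[ℝ])) := (Quaternion.coe_commute _ s).symm
  exact (c1.sub_right c2).add_right c3

lemma key_identity (s q : ℍ[ℝ]) : (s - star q) * s - q * (s - star q) = Qc s q := by
  have h1 : q + star q = ((2*q.re : ℝ) : ℍ[ℝ]) := by exact_mod_cast q.self_add_star'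
  have h2 : q * star q = ((‖q‖^2 : ℝ) : ℍ[ℝ]) := by
    rw [Quaternion.mul_star_eq_coe]
    congr 1
    rw [← Quaternion.normSq_def, sq, ← Quaternion.normSq_eq_norm_mul_self]
  have e : (s - star q) * s - q * (s - star q) = s^2 - (q + star q) * s + q * star q := by
    noncomm_ring
  rw [e, h1, h2, Qc, Quaternion.coe_mul, coe_two']

/-- for `s ∉ [q]`, `F_L(s,q) s − q F_L(s,q) = −4 Q_{c,s}(q)⁻¹`. -/
theorem FL_s_sub_q_FL (s q : ℍ[ℝ]) (h : ¬ inSphereOf s q) :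
    FL s q * s - q * FL s q = -4 * (Qc s q)⁻¹ := by
  have hQ := Qc_ne_zero s q h
  have hc : Commute s (((Qc s q)⁻¹)^2) := ((Qc_commute s q).inv_right₀).pow_right 2
  unfold FL
  calc -4 * (s - star q) * ((Qc s q)⁻¹) ^ 2 * s - q * (-4 * (s - star q) * ((Qc s q)⁻¹) ^ 2)
      = -4 * ((s - star q) * s - q * (s - star q)) * ((Qc s q)⁻¹) ^ 2 := by
        rw [mul_assoc (-4 * (s - star q)), ← hc.eq]; noncomm_ring
    _ = -4 * Qc s q * ((Qc s q)⁻¹) ^ 2 := by rw [key_identity]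
    _ = -4 * (Qc s q)⁻¹ := by
        rw [pow_two, mul_assoc, ← mul_assoc (Qc s q), mul_inv_cancel₀ hQ, one_mul]

end
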